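/- Under the mirror descent update ∇ψ(w_{t+1}) = ∇ψ(w_t) − η∇L(w_t), if ψ − ηL is convex and L is convex (both differentiable), then L(w_{t+1}) ≤ L(w_t). -/

import Mathlib

open RealInnerProductSpace

lemma grad_ineq {d : ℕ} (f : EuclideanSpace ℝ (Fin d) → ℝ)
    (g : EuclideanSpace ℝ (Fin d) → EuclideanSpace ℝ (Fin d))
    (hconv : ConvexOn ℝ Set.univ f)
    (hg : ∀ x, HasGradientAt f (g x) x)
    (x y : EuclideanSpace ℝ (Fin d)) :
    f x + ⟪g x, y - x⟫ ≤ f y := by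
  set φ : ℝ → ℝ := fun t => f (x + t • (y - x)) with hφ
  have hline : ∀ t : ℝ, HasDerivAt (fun s : ℝ => x + s • (y - x)) (y - x) t := by
    intro t
    simpa using ((hasDerivAt_id t).smul_const (y - x)).const_add x
  have hder : ∀ t : ℝ, HasDerivAt φ ⟪g (x + t • (y - x)), y - x⟫ t := by
    intro t
    have h1 := ((hg (x + t • (y - x))).hasFDerivAt).comp_hasDerivAt t (hline t)
    simp at h1
    exact h1
  have hφconv : ConvexOn ℝ Set.univ φ := by
    have := hconv.comp_affineMap (AffineMap.lineMap x y : ℝ →ᵃ[ℝ] EuclideanSpace ℝ (Fin d))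
    have heq : φ = f ∘ (AffineMap.lineMap x y : ℝ →ᵃ[ℝ] EuclideanSpace ℝ (Fin d)) := by
      funext t
      simp [hφ, AffineMap.lineMap_apply, add_comm]
    rw [heq]
    simpa using this
  have h01 : (0 : ℝ) < 1 := one_pos
  have hslope := hφconv.le_slope_of_hasDerivAt (Set.mem_univ 0) (Set.mem_univ 1) h01
    (by simpa using hder 0)
  have : ⟪g x, y - x⟫ ≤ slope φ 0 1 := by simpa using hslope
  have hsl : slope φ 0 1 = φ 1 - φ 0 := by simp [slope_def_field]
  have hφ0 : φ 0 = f x := by simp [hφ]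
  have hφ1 : φ 1 = f y := by simp [hφ]
  rw [hsl, hφ0, hφ1] at this
  linarith

/-- Under the mirror descent update, if ψ − ηL is convex and L is convex, the loss decreases. -/
theorem md_loss_decreasing {d : ℕ} (ψ L : EuclideanSpace ℝ (Fin d) → ℝ)
    (gψ gL : EuclideanSpace ℝ (Fin d) → EuclideanSpace ℝ (Fin d))
    (hψconv : StrictConvexOn ℝ Set.univ ψ)
    (hLconv : ConvexOn ℝ Set.univ L)
    (hψ : ∀ x, HasGradientAt ψ (gψ x) x)
    (hL : ∀ x, HasGradientAt L (gL x) x)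
    (η : ℝ) (hη : 0 < η)
    (hconv : ConvexOn ℝ Set.univ (fun x => ψ x - η * L x))
    (wt wt1 : EuclideanSpace ℝ (Fin d))
    (hupdate : gψ wt1 = gψ wt - η • gL wt) :
    L wt1 ≤ L wt := by
  -- gradient of φ := ψ - η L is gψ - η gL
  set φ : EuclideanSpace ℝ (Fin d) → ℝ := fun x => ψ x - η * L x with hφdef
  have hgφ : ∀ x, HasGradientAt φ (gψ x - η • gL x) x := by
    intro x
    have h1 := (hψ x).hasFDerivAt
    have h2 := (hL x).hasFDerivAt
    have h3 : HasFDerivAt φ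
        ((InnerProductSpace.toDual ℝ _ (gψ x)) - η • (InnerProductSpace.toDual ℝ _ (gL x))) x := by
      exact h1.sub (h2.const_smul η)
    rw [hasGradientAt_iff_hasFDerivAt]
    convert h3 using 1
    · rfl
    ext v
    simp [inner_sub_left, real_inner_smul_left]
    rw [map_sub, map_smul]
  -- monotonicity from convexity of φ
  have h1 := grad_ineq φ _ hconv hgφ wt wt1
  have h2 := grad_ineq φ _ hconv hgφ wt1 wt
  have hmono : (0:ℝ) ≤ ⟪(gψ wt1 - η • gL wt1) - (gψ wt - η • gL wt), wt1 - wt⟫ := by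
    have hrw : wt - wt1 = -(wt1 - wt) := by abel
    rw [inner_sub_left]
    rw [hrw, inner_neg_right] at h2
    linarith
  have hkey : ⟪gL wt1, wt1 - wt⟫ ≤ 0 := by
    rw [hupdate] at hmono
    have : gψ wt - η • gL wt - η • gL wt1 - (gψ wt - η • gL wt) = -(η • gL wt1) := by abel
    rw [this, inner_neg_left, real_inner_smul_left] at hmono
    nlinarith
  -- convexity of L at wt1
  have h3 := grad_ineq L gL hLconv hL wt1 wt
  have hrw : wt - wt1 = -(wt1 - wt) := by abel
  rw [hrw, inner_neg_right] at h3
  linarith
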